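/- Let μ ∈ ℂ be an algebraic integer such that |μ| < 1 and every complex root of the minimal polynomial of μ over ℚ has absolute value at most 1. Then μ = 0. -/

import Mathlib

open Polynomial

private lemma multiset_prod_le_one (s : Multiset ℝ) (h : ∀ x ∈ s, 0 ≤ x ∧ x ≤ 1) :
    s.prod ≤ 1 := by
  induction s using Multiset.induction with
  | empty => simp
  | cons a t ih =>
    rw [Multiset.prod_cons]
    have ha := h a (Multiset.mem_cons_self a t)
    have ht := ih (fun x hx => h x (Multiset.mem_cons_of_mem hx))
    have htnn : 0 ≤ t.prod :=
      Multiset.prod_nonneg (fun x hx => (h x (Multiset.mem_cons_of_mem hx)).1)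
    calc a * t.prod ≤ 1 * 1 := mul_le_mul ha.2 ht htnn zero_le_one
      _ = 1 := by ring

theorem algebraic_integer_eq_zero_of_conjugates_lt_one
    (μ : ℂ) (hμ : IsIntegral ℤ μ) (habs : ‖μ‖ < 1)
    (hconj : ∀ z : ℂ, Polynomial.aeval z (minpoly ℚ μ) = 0 → ‖z‖ ≤ 1) :
    μ = 0 := by
  have hμQ : IsIntegral ℚ μ := hμ.tower_top
  set p : ℚ[X] := minpoly ℚ μ with hp
  set P : ℂ[X] := p.map (algebraMap ℚ ℂ) with hP
  have hpm : p.Monic := minpoly.monic hμQ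
  have hPm : P.Monic := hpm.map _
  have hP0 : P ≠ 0 := hPm.ne_zero
  have hroot : P.eval μ = 0 := by
    rw [hP, eval_map, ← aeval_def]
    exact minpoly.aeval ℚ μ
  have hμmem : μ ∈ P.roots := by
    rw [mem_roots hP0]; exact hroot
  have hall : ∀ z ∈ P.roots, ‖z‖ ≤ 1 := by
    intro z hz
    apply hconj
    rw [aeval_def, ← eval_map, ← hP]
    exact (mem_roots hP0).1 hz
  -- abs of product of roots < 1
  have hsplit : P = (P.roots.map fun a => X - C a).prod :=
    (IsAlgClosed.splits P).eq_prod_roots_of_monic hPm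
  have heval0 : ‖P.eval 0‖ < 1 := by
    rw [hsplit, eval_multiset_prod, Multiset.map_map]
    rw [show Multiset.map (eval 0 ∘ fun a => X - C a) P.roots
        = Multiset.map (fun a => -a) P.roots from
      Multiset.map_congr rfl (by intro a _; simp)]
    rw [show ∀ m : Multiset ℂ, ‖m.prod‖ = (m.map norm).prod from map_multiset_prod (normHom (α := ℂ)), Multiset.map_map]
    rw [show Multiset.map (norm ∘ fun a : ℂ => -a) P.roots
        = Multiset.map (fun a => ‖a‖) P.roots from
      Multiset.map_congr rfl (by intro a _; simp)]
    obtain ⟨t, ht⟩ : ∃ t, P.roots = μ ::ₘ t := ⟨P.roots.erase μ, (Multiset.cons_erase hμmem).symm⟩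
    rw [ht, Multiset.map_cons, Multiset.prod_cons]
    have htle : (Multiset.map (fun a => ‖a‖) t).prod ≤ 1 := by
      apply multiset_prod_le_one
      intro x hx
      obtain ⟨a, ha, rfl⟩ := Multiset.mem_map.1 hx
      exact ⟨norm_nonneg a, hall a (ht ▸ Multiset.mem_cons_of_mem ha)⟩
    calc ‖μ‖ * (Multiset.map (fun a => ‖a‖) t).prod
        ≤ ‖μ‖ * 1 := mul_le_mul_of_nonneg_left htle (norm_nonneg μ)
      _ = ‖μ‖ := mul_one _
      _ < 1 := habs
  -- relate P.eval 0 to integer coefficient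
  have hZ : p = (minpoly ℤ μ).map (algebraMap ℤ ℚ) :=
    minpoly.isIntegrallyClosed_eq_field_fractions ℚ ℂ hμ
  have hco : p.coeff 0 = (algebraMap ℤ ℚ) ((minpoly ℤ μ).coeff 0) := by
    rw [hZ, coeff_map]
  have heq : P.eval 0 = (algebraMap ℚ ℂ) (p.coeff 0) := by
    rw [hP, eval_map, eval₂_at_zero]
  rw [heq, hco] at heval0
  set n : ℤ := (minpoly ℤ μ).coeff 0 with hn
  have hcast : (algebraMap ℚ ℂ) ((algebraMap ℤ ℚ) n) = (n : ℂ) := by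
    rw [eq_intCast, map_intCast]
  rw [hcast, Complex.norm_intCast] at heval0
  have hint : n = 0 := by
    rw [Int.abs_lt_one_iff.symm]
    exact_mod_cast heval0
  have hco0 : p.coeff 0 = 0 := by rw [hco, hint]; simp
  exact (minpoly.coeff_zero_eq_zero hμQ).1 hco0
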